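/- Let σ : ℝ^{3×3} → ℝ^{3×3} be differentiable and isotropic, i.e. σ(Q A Qᵀ) = Q σ(A) Qᵀ for every orthogonal matrix Q ∈ O(3) and every A ∈ ℝ^{3×3}. Then for every symmetric positive definite matrix B ∈ Sym⁺⁺(3) and every skew-symmetric matrix Ω ∈ 𝔰𝔬(3), one has Ω σ(B) − σ(B) Ω = Dσ(B).[Ω B − B Ω], where Dσ(B) denotes the Fréchet derivative of σ at B. -/

import Mathlib

open Matrix

noncomputable section

attribute [local instance] Matrix.frobeniusNormedAddCommGroup Matrix.frobeniusNormedSpace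

attribute [local instance] Matrix.frobeniusNormedRing Matrix.frobeniusNormedAlgebra

open NormedSpace in
/-- For a differentiable isotropic tensor function `σ`, every symmetric
positive definite `B` and every skew-symmetric `Ω`, we have
`Ω σ(B) − σ(B) Ω = Dσ(B).[Ω B − B Ω]`. -/
theorem corotational_commutator_identity
    (σ : Matrix (Fin 3) (Fin 3) ℝ → Matrix (Fin 3) (Fin 3) ℝ)
    (hσ : Differentiable ℝ σ)
    (hiso : ∀ Q A : Matrix (Fin 3) (Fin 3) ℝ, Qᵀ * Q = 1 → σ (Q * A * Qᵀ) = Q * σ A * Qᵀ)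
    (B : Matrix (Fin 3) (Fin 3) ℝ) (hB : B.PosDef)
    (Ω : Matrix (Fin 3) (Fin 3) ℝ) (hΩ : Ωᵀ = -Ω) :
    Ω * σ B - σ B * Ω = fderiv ℝ σ B (Ω * B - B * Ω) := by
  -- the one-parameter group of rotations
  set e : ℝ → Matrix (Fin 3) (Fin 3) ℝ := fun u => exp (u • Ω) with he_def
  have hT : ∀ u : ℝ, (e u)ᵀ = exp (u • (-Ω)) := by
    intro u
    rw [he_def]
    rw [← Matrix.exp_transpose, Matrix.transpose_smul, hΩ]
  have horth : ∀ u : ℝ, (e u)ᵀ * e u = 1 := by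
    intro u
    rw [hT u, he_def]
    have hc : Commute (u • (-Ω)) (u • Ω) := by
      simp only [smul_neg]
      exact (Commute.refl (u • Ω)).neg_left
    rw [← Matrix.exp_add_of_commute _ _ hc]
    simp
  -- derivative of e at 0 is Ω
  have h1 : HasDerivAt e Ω 0 := by
    have := hasDerivAt_exp_smul_const (𝕂 := ℝ) Ω 0
    simp only [zero_smul, exp_zero, one_mul] at this
    exact this
  -- derivative of u ↦ (e u)ᵀ at 0 is -Ω
  have h2 : HasDerivAt (fun u : ℝ => (e u)ᵀ) (-Ω) 0 := by
    have := hasDerivAt_exp_smul_const (𝕂 := ℝ) (-Ω) 0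
    simp only [zero_smul, exp_zero, one_mul] at this
    exact this.congr_of_eventuallyEq (Filter.Eventually.of_forall fun u => hT u)
  have he0 : e 0 = 1 := by simp [he_def]
  -- derivative of F u = e u * B * (e u)ᵀ at 0 is Ω*B - B*Ω
  have hF : HasDerivAt (fun u : ℝ => e u * B * (e u)ᵀ) (Ω * B - B * Ω) 0 := by
    have := ((h1.mul_const B).mul h2)
    simp only [he0, one_mul, mul_one, transpose_one] at this
    rw [mul_neg, ← sub_eq_add_neg] at this
    exact this
  -- derivative of G u = e u * σ B * (e u)ᵀ at 0 is Ω*σB - σB*Ω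
  have hG : HasDerivAt (fun u : ℝ => e u * σ B * (e u)ᵀ) (Ω * σ B - σ B * Ω) 0 := by
    have := ((h1.mul_const (σ B)).mul h2)
    simp only [he0, one_mul, mul_one, transpose_one] at this
    rw [mul_neg, ← sub_eq_add_neg] at this
    exact this
  -- chain rule
  have hF0 : e 0 * B * (e 0)ᵀ = B := by simp [he0]
  have hchain : HasDerivAt (fun u : ℝ => σ (e u * B * (e u)ᵀ))
      (fderiv ℝ σ B (Ω * B - B * Ω)) 0 := by
    have hd : HasFDerivAt σ (fderiv ℝ σ B) (e 0 * B * (e 0)ᵀ) := by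
      rw [hF0]; exact (hσ B).hasFDerivAt
    exact hd.comp_hasDerivAt 0 hF
  have heq : (fun u : ℝ => σ (e u * B * (e u)ᵀ)) = fun u : ℝ => e u * σ B * (e u)ᵀ := by
    funext u
    exact hiso (e u) B (horth u)
  rw [heq] at hchain
  exact hG.unique hchain
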